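/- Lemma 3: if (χ, a, f, Q) is a solution of system (10) on (0,∞) satisfying conditions (C1) and (C2), and Q(ρ₀) > 0 for some ρ₀ > 0, then the limit a_∞ of a(ρ) as ρ → ∞ (which exists by (C1)) satisfies −2 ≤ a_∞ ≤ 0. -/

import Mathlib

open Real Filter Topology Set

/-- Monotonicity helper: if `g` has nonnegative derivative on `Ici R`, it is monotone there. -/
lemma mono_helper (g g' : ℝ → ℝ) (R : ℝ)
    (hg : ∀ ρ ∈ Ici R, HasDerivAt g (g' ρ) ρ)
    (h0 : ∀ ρ ∈ Ici R, 0 ≤ g' ρ) : MonotoneOn g (Ici R) := by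
  apply monotoneOn_of_deriv_nonneg (convex_Ici R)
  · exact fun x hx => (hg x hx).continuousAt.continuousWithinAt
  · rw [interior_Ici]
    exact fun x hx => ((hg x (Ioi_subset_Ici_self hx)).differentiableAt).differentiableWithinAt
  · intro x hx
    rw [interior_Ici] at hx
    rw [(hg x (Ioi_subset_Ici_self hx)).deriv]
    exact h0 x (Ioi_subset_Ici_self hx)

/-- Positivity of `Q`: since `Q' = -Q sin χ ≥ -Q`, the function `Q e^ρ` is nondecreasing. -/
lemma Q_pos_of_pos (χ Q : ℝ → ℝ)
    (hQ : ∀ ρ > (0:ℝ), HasDerivAt Q (-Q ρ * Real.sin (χ ρ)) ρ)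
    (hQnn : ∀ ρ > (0:ℝ), 0 ≤ Q ρ)
    (ρ₀ : ℝ) (hρ₀ : 0 < ρ₀) (hQρ₀ : 0 < Q ρ₀) :
    ∀ ρ ≥ ρ₀, 0 < Q ρ := by
  have hmono : MonotoneOn (fun ρ => Q ρ * Real.exp ρ) (Ici ρ₀) := by
    apply mono_helper _ (fun ρ => -Q ρ * Real.sin (χ ρ) * Real.exp ρ + Q ρ * Real.exp ρ)
    · intro ρ hρ
      have hρpos : 0 < ρ := lt_of_lt_of_le hρ₀ hρ
      exact (hQ ρ hρpos).mul (Real.hasDerivAt_exp ρ)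
    · intro ρ hρ
      have hρpos : 0 < ρ := lt_of_lt_of_le hρ₀ hρ
      have h1 := hQnn ρ hρpos
      have h2 := Real.sin_le_one (χ ρ)
      have h3 := Real.exp_pos ρ
      nlinarith [mul_nonneg (mul_nonneg h1 h3.le) (sub_nonneg.mpr h2)]
  intro ρ hρ
  have hm : Q ρ₀ * Real.exp ρ₀ ≤ Q ρ * Real.exp ρ := hmono (self_mem_Ici) (mem_Ici.mpr hρ) hρ
  have h3 := Real.exp_pos ρ
  have h4 := Real.exp_pos ρ₀
  by_contra hq
  push_neg at hq
  nlinarith [mul_pos hQρ₀ h4, mul_nonneg (neg_nonneg.mpr hq) h3.le]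

/-- Key contradiction lemma: if `σ·χ'` is bounded below by `c > 0` on `[R,∞)` and
`Q R > 0`, then `Q` cannot tend to `0`. Uses that `(Q·χ')' = Q·a'` with `|a'| ≤ M/ρ²`. -/
lemma key_lemma (χ a f Q : ℝ → ℝ) (ε σ c B M R : ℝ)
    (hε : ε = 1 ∨ ε = -1) (hσ : |σ| ≤ 1) (hc : 0 < c) (hMnn : 0 ≤ M) (hR : 0 < R)
    (hχ : ∀ ρ > (0:ℝ), HasDerivAt χ (a ρ + 1 - Real.cos (χ ρ)) ρ)
    (ha : ∀ ρ > (0:ℝ), HasDerivAt a (-ε * f ρ / ρ ^ 2) ρ)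
    (hQ : ∀ ρ > (0:ℝ), HasDerivAt Q (-Q ρ * Real.sin (χ ρ)) ρ)
    (hQnn : ∀ ρ > (0:ℝ), 0 ≤ Q ρ)
    (hQR : 0 < Q R)
    (hlow : ∀ ρ ≥ R, c ≤ σ * (a ρ + 1 - Real.cos (χ ρ)))
    (hup : ∀ ρ ≥ R, |a ρ + 1 - Real.cos (χ ρ)| ≤ B)
    (hMf : ∀ ρ > (0:ℝ), |f ρ| ≤ M)
    (hC2 : Tendsto Q atTop (𝓝 0)) : False := by
  set K : ℝ := M / c with hK
  have hKnn : 0 ≤ K := div_nonneg hMnn hc.le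
  have hcK : c * K = M := by rw [hK]; field_simp [hc.ne']
  set ψ : ℝ → ℝ :=
    fun ρ => σ * (Q ρ * (a ρ + 1 - Real.cos (χ ρ))) * Real.exp (-(K / ρ)) with hψ
  set ψ' : ℝ → ℝ := fun ρ =>
    σ * (Q ρ * (-ε * f ρ / ρ ^ 2)) * Real.exp (-(K / ρ)) +
      σ * (Q ρ * (a ρ + 1 - Real.cos (χ ρ))) * (Real.exp (-(K / ρ)) * (K / ρ ^ 2)) with hψ'
  have hεabs : |ε| = 1 := by rcases hε with h | h <;> simp [h]
  -- derivative of ψ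
  have hderiv : ∀ ρ ∈ Ici R, HasDerivAt ψ (ψ' ρ) ρ := by
    intro ρ hρ
    have hρpos : 0 < ρ := lt_of_lt_of_le hR hρ
    have hd1 : HasDerivAt (fun ρ => Q ρ * (a ρ + 1 - Real.cos (χ ρ)))
        (Q ρ * (-ε * f ρ / ρ ^ 2)) ρ := by
      have h1 := (hQ ρ hρpos).mul
        (((ha ρ hρpos).add_const 1).sub ((hχ ρ hρpos).cos))
      refine h1.congr_deriv ?_
      simp only [Pi.sub_apply]
      ring
    have hd2 : HasDerivAt (fun ρ => Real.exp (-(K / ρ)))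
        (Real.exp (-(K / ρ)) * (K / ρ ^ 2)) ρ := by
      have hi : HasDerivAt (fun ρ : ℝ => -(K / ρ)) (K / ρ ^ 2) ρ := by
        have h2 := ((hasDerivAt_inv hρpos.ne').const_mul K).neg
        refine h2.congr_deriv ?_
        field_simp
      exact hi.exp
    have h3 := ((hd1.const_mul σ).mul hd2)
    exact h3
  -- nonnegativity of ψ'
  have hnonneg : ∀ ρ ∈ Ici R, 0 ≤ ψ' ρ := by
    intro ρ hρ
    have hρpos : 0 < ρ := lt_of_lt_of_le hR hρ
    have hl := hlow ρ hρ
    have hfb := abs_le.mp (hMf ρ hρpos)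
    have hσb := abs_le.mp hσ
    have hQρ := hQnn ρ hρpos
    have hexp : 0 < Real.exp (-(K / ρ)) := Real.exp_pos _
    have hρ2 : 0 < ρ ^ 2 := by positivity
    have key : 0 ≤ σ * (Q ρ * (-ε * f ρ)) +
        σ * (Q ρ * (a ρ + 1 - Real.cos (χ ρ))) * K := by
      have h1 : Q ρ * M ≤ σ * (Q ρ * (a ρ + 1 - Real.cos (χ ρ))) * K := by
        have h2 : Q ρ * c ≤ Q ρ * (σ * (a ρ + 1 - Real.cos (χ ρ))) :=
          mul_le_mul_of_nonneg_left hl hQρ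
        have h3 : Q ρ * c * K ≤ Q ρ * (σ * (a ρ + 1 - Real.cos (χ ρ))) * K :=
          mul_le_mul_of_nonneg_right h2 hKnn
        calc Q ρ * M = Q ρ * c * K := by rw [← hcK]; ring
          _ ≤ Q ρ * (σ * (a ρ + 1 - Real.cos (χ ρ))) * K := h3
          _ = σ * (Q ρ * (a ρ + 1 - Real.cos (χ ρ))) * K := by ring
      have h4 : |σ * (-ε * f ρ)| ≤ M := by
        rw [abs_mul, abs_mul, abs_neg, hεabs, one_mul]
        calc |σ| * |f ρ| ≤ 1 * M := mul_le_mul hσ (hMf ρ hρpos) (abs_nonneg _) one_pos.le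
          _ = M := one_mul M
      have h5 : -(Q ρ * M) ≤ σ * (Q ρ * (-ε * f ρ)) := by
        have h7 := (abs_le.mp h4).1
        have h6 : Q ρ * (-M) ≤ Q ρ * (σ * (-ε * f ρ)) := mul_le_mul_of_nonneg_left h7 hQρ
        calc -(Q ρ * M) = Q ρ * (-M) := by ring
          _ ≤ Q ρ * (σ * (-ε * f ρ)) := h6
          _ = σ * (Q ρ * (-ε * f ρ)) := by ring
      linarith
    have heq : ψ' ρ = (Real.exp (-(K / ρ)) / ρ ^ 2) *
        (σ * (Q ρ * (-ε * f ρ)) + σ * (Q ρ * (a ρ + 1 - Real.cos (χ ρ))) * K) := by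
      simp only [hψ']
      field_simp
    rw [heq]
    positivity
  have hmono := mono_helper ψ ψ' R hderiv hnonneg
  -- ψ R > 0
  have hψR : 0 < ψ R := by
    have hl := hlow R le_rfl
    have hexp : 0 < Real.exp (-(K / R)) := Real.exp_pos _
    have h1 : 0 < σ * (Q R * (a R + 1 - Real.cos (χ R))) := by
      have h2 : Q R * c ≤ Q R * (σ * (a R + 1 - Real.cos (χ R))) :=
        mul_le_mul_of_nonneg_left hl hQR.le
      nlinarith [mul_pos hQR hc]
    exact mul_pos h1 hexp
  -- B is positive
  have hB : 0 < B := by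
    have h1 := hup R le_rfl
    have h2 := hlow R le_rfl
    have h3 : σ * (a R + 1 - Real.cos (χ R)) ≤ |a R + 1 - Real.cos (χ R)| := by
      calc σ * (a R + 1 - Real.cos (χ R)) ≤ |σ * (a R + 1 - Real.cos (χ R))| := le_abs_self _
        _ = |σ| * |a R + 1 - Real.cos (χ R)| := abs_mul _ _
        _ ≤ 1 * |a R + 1 - Real.cos (χ R)| := mul_le_mul_of_nonneg_right hσ (abs_nonneg _)
        _ = |a R + 1 - Real.cos (χ R)| := one_mul _
    linarith
  -- lower bound on Q
  have hQlow : ∀ ρ ≥ R, ψ R / B ≤ Q ρ := by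
    intro ρ hρ
    have hρpos : 0 < ρ := lt_of_lt_of_le hR hρ
    have hm : ψ R ≤ ψ ρ := hmono self_mem_Ici (mem_Ici.mpr hρ) hρ
    have hQρ := hQnn ρ hρpos
    have hexp1 : Real.exp (-(K / ρ)) ≤ 1 := by
      rw [Real.exp_le_one_iff]
      have : 0 ≤ K / ρ := div_nonneg hKnn hρpos.le
      linarith
    have hl := hlow ρ hρ
    have hu := hup ρ hρ
    have hσw : 0 ≤ σ * (Q ρ * (a ρ + 1 - Real.cos (χ ρ))) := by
      have h2 : Q ρ * c ≤ Q ρ * (σ * (a ρ + 1 - Real.cos (χ ρ))) :=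
        mul_le_mul_of_nonneg_left hl hQρ
      nlinarith [mul_nonneg hQρ hc.le]
    have hψle : ψ ρ ≤ B * Q ρ := by
      have h1 : ψ ρ ≤ σ * (Q ρ * (a ρ + 1 - Real.cos (χ ρ))) :=
        mul_le_of_le_one_right hσw hexp1
      have h3 : σ * (a ρ + 1 - Real.cos (χ ρ)) ≤ B := by
        calc σ * (a ρ + 1 - Real.cos (χ ρ)) ≤ |σ * (a ρ + 1 - Real.cos (χ ρ))| := le_abs_self _
          _ = |σ| * |a ρ + 1 - Real.cos (χ ρ)| := abs_mul _ _
          _ ≤ 1 * B := mul_le_mul hσ hu (abs_nonneg _) one_pos.le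
          _ = B := one_mul _
      have h2 : σ * (Q ρ * (a ρ + 1 - Real.cos (χ ρ))) ≤ B * Q ρ := by
        calc σ * (Q ρ * (a ρ + 1 - Real.cos (χ ρ)))
            = Q ρ * (σ * (a ρ + 1 - Real.cos (χ ρ))) := by ring
          _ ≤ Q ρ * B := mul_le_mul_of_nonneg_left h3 hQρ
          _ = B * Q ρ := by ring
      linarith
    rw [div_le_iff₀ hB]
    nlinarith
  -- contradiction with Q → 0
  have hδ : 0 < ψ R / B := div_pos hψR hB
  obtain ⟨N, hN⟩ := Metric.tendsto_atTop.mp hC2 (ψ R / B) hδ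
  have h1 := hQlow (max R N) (le_max_left _ _)
  have h2 := hN (max R N) (le_max_right _ _)
  rw [Real.dist_eq, sub_zero] at h2
  have hρpos : 0 < max R N := lt_of_lt_of_le hR (le_max_left _ _)
  have h3 := hQnn (max R N) hρpos
  rw [abs_of_nonneg h3] at h2
  linarith

/-- **Lemma 3.** For a solution `(χ, a, f, Q)` of system (10) on
`(0,∞)` satisfying conditions (C1) and (C2), with `Q(ρ₀) > 0` for some `ρ₀ > 0`,
the asymptotic value `a_∞` of the potential satisfies `−2 ≤ a_∞ ≤ 0`. -/
theorem lemma3_asymptotic_potential_bounds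
    (χ a f Q : ℝ → ℝ) (ε : ℝ) (hε : ε = 1 ∨ ε = -1)
    (hχ : ∀ ρ > (0:ℝ), HasDerivAt χ (a ρ + 1 - Real.cos (χ ρ)) ρ)
    (ha : ∀ ρ > (0:ℝ), HasDerivAt a (-ε * f ρ / ρ ^ 2) ρ)
    (hf : ∀ ρ > (0:ℝ), HasDerivAt f (Q ρ) ρ)
    (hQ : ∀ ρ > (0:ℝ), HasDerivAt Q (-Q ρ * Real.sin (χ ρ)) ρ)
    (hQnn : ∀ ρ > (0:ℝ), 0 ≤ Q ρ)
    -- Condition (C1)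
    (hfbdd : ∃ Mf, ∀ ρ > (0:ℝ), |f ρ| ≤ Mf)
    (hQbdd : ∃ MQ, ∀ ρ > (0:ℝ), |Q ρ| ≤ MQ)
    (hflim : ∃ Lf, Tendsto f atTop (𝓝 Lf))
    -- Condition (C2)
    (hC2 : Tendsto Q atTop (𝓝 0))
    (ρ₀ : ℝ) (hρ₀ : 0 < ρ₀) (hQρ₀ : 0 < Q ρ₀)
    (aInf : ℝ) (haInf : Tendsto a atTop (𝓝 aInf)) :
    -2 ≤ aInf ∧ aInf ≤ 0 := by
  obtain ⟨M, hM⟩ := hfbdd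
  have hMnn : 0 ≤ M := le_trans (abs_nonneg _) (hM ρ₀ hρ₀)
  have hQpos := Q_pos_of_pos χ Q hQ hQnn ρ₀ hρ₀ hQρ₀
  by_contra hcon
  push_neg at hcon
  rcases lt_or_ge aInf (-2) with hcase | hge2
  · -- aInf < -2, take σ = -1, c = (-2 - aInf)/2
    set c : ℝ := (-2 - aInf) / 2 with hc
    have hcpos : 0 < c := by simp only [hc]; linarith
    obtain ⟨N, hN⟩ := Metric.tendsto_atTop.mp haInf c hcpos
    set R : ℝ := max N ρ₀ with hRdef
    have hRρ₀ : ρ₀ ≤ R := le_max_right _ _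
    have hRpos : 0 < R := lt_of_lt_of_le hρ₀ hRρ₀
    refine key_lemma χ a f Q ε (-1) c (|aInf| + c + 2) M R hε (by norm_num)
      hcpos hMnn hRpos hχ ha hQ hQnn (hQpos R hRρ₀) ?_ ?_ hM hC2
    · intro ρ hρ
      have hd := hN ρ (le_trans (le_max_left _ _) hρ)
      rw [Real.dist_eq] at hd
      have h1 := abs_lt.mp hd
      have hcos := Real.neg_one_le_cos (χ ρ)
      simp only [hc] at *
      nlinarith
    · intro ρ hρ
      have hd := hN ρ (le_trans (le_max_left _ _) hρ)
      rw [Real.dist_eq] at hd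
      have h1 := abs_lt.mp hd
      have hcos1 := Real.neg_one_le_cos (χ ρ)
      have hcos2 := Real.cos_le_one (χ ρ)
      rw [abs_le]
      constructor <;> nlinarith [le_abs_self aInf, neg_abs_le aInf]
  · -- aInf > 0, take σ = 1, c = aInf/2
    have h0 : 0 < aInf := hcon hge2
    set c : ℝ := aInf / 2 with hc
    have hcpos : 0 < c := by simp only [hc]; linarith
    obtain ⟨N, hN⟩ := Metric.tendsto_atTop.mp haInf c hcpos
    set R : ℝ := max N ρ₀ with hRdef
    have hRρ₀ : ρ₀ ≤ R := le_max_right _ _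
    have hRpos : 0 < R := lt_of_lt_of_le hρ₀ hRρ₀
    refine key_lemma χ a f Q ε 1 c (|aInf| + c + 2) M R hε (by norm_num)
      hcpos hMnn hRpos hχ ha hQ hQnn (hQpos R hRρ₀) ?_ ?_ hM hC2
    · intro ρ hρ
      have hd := hN ρ (le_trans (le_max_left _ _) hρ)
      rw [Real.dist_eq] at hd
      have h1 := abs_lt.mp hd
      have hcos := Real.cos_le_one (χ ρ)
      simp only [hc] at *
      nlinarith
    · intro ρ hρ
      have hd := hN ρ (le_trans (le_max_left _ _) hρ)
      rw [Real.dist_eq] at hd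
      have h1 := abs_lt.mp hd
      have hcos1 := Real.neg_one_le_cos (χ ρ)
      have hcos2 := Real.cos_le_one (χ ρ)
      rw [abs_le]
      constructor <;> nlinarith [le_abs_self aInf, neg_abs_le aInf]
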